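/- With U as above and α = β = 1/√2, if Re⟨e₀|e₂⟩ + Re⟨e₁|e₃⟩ = 0 and Im⟨e₀|e₂⟩ + Im⟨e₁|e₃⟩ = 0, then p_{a,ā} + p_{b,b̄} = 1 − (1/2)(Re⟨e₀|e₁⟩ + Im⟨e₀|e₁⟩ + Re⟨e₂|e₃⟩ + Im⟨e₂|e₃⟩) − Re⟨e₀|e₃⟩, where p_{a,ā} and p_{b,b̄} are the mismatch probabilities in the X and Y bases respectively. -/

import Mathlib

open scoped ComplexInnerProductSpace

/-- The embedding x ↦ |0⟩⊗x of the ancilla into qubit ⊗ ancilla (modeled as E × E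
with the L² inner product, first component = |0⟩ slot, second = |1⟩ slot). -/
noncomputable def emb0 {E : Type*} [NormedAddCommGroup E] [InnerProductSpace ℂ E]
    (x : E) : WithLp 2 (E × E) := (WithLp.equiv 2 (E × E)).symm (x, 0)

/-- The embedding x ↦ |1⟩⊗x of the ancilla into qubit ⊗ ancilla. -/
noncomputable def emb1 {E : Type*} [NormedAddCommGroup E] [InnerProductSpace ℂ E]
    (x : E) : WithLp 2 (E × E) := (WithLp.equiv 2 (E × E)).symm (0, x)

lemma emb_norm_sq {E : Type*} [NormedAddCommGroup E] [InnerProductSpace ℂ E]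
    (x y : E) : ‖emb0 x + emb1 y‖^2 = ‖x‖^2 + ‖y‖^2 := by
  rw [WithLp.prod_norm_sq_eq_of_L2]
  have h1 : (emb0 x + emb1 y).fst = x := by
    simp [emb0, emb1, WithLp.add_fst, WithLp.toLp_fst]
  have h2 : (emb0 x + emb1 y).snd = y := by
    simp [emb0, emb1, WithLp.add_snd, WithLp.toLp_snd]
  rw [h1, h2]

lemma emb0_norm {E : Type*} [NormedAddCommGroup E] [InnerProductSpace ℂ E]
    (x : E) : ‖emb0 x‖ = ‖x‖ := by
  simpa [emb0] using WithLp.norm_equiv_symm_fst 2 E E x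

lemma emb1_norm {E : Type*} [NormedAddCommGroup E] [InnerProductSpace ℂ E]
    (x : E) : ‖emb1 x‖ = ‖x‖ := by
  simpa [emb1] using WithLp.norm_equiv_symm_snd 2 E E x

/-- for α = β = 1/√2, under the unitarity constraints
Re⟨e₀|e₂⟩+Re⟨e₁|e₃⟩ = 0 and Im⟨e₀|e₂⟩+Im⟨e₁|e₃⟩ = 0,
p_{a,ā} + p_{b,b̄} = 1 − ½(Re⟨e₀|e₁⟩+Im⟨e₀|e₁⟩+Re⟨e₂|e₃⟩+Im⟨e₂|e₃⟩) − Re⟨e₀|e₃⟩. -/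
theorem paa_plus_pbb {E : Type*} [NormedAddCommGroup E]
    [InnerProductSpace ℂ E] [FiniteDimensional ℂ E]
    (U : WithLp 2 (E × E) ≃ₗᵢ[ℂ] WithLp 2 (E × E))
    (χ e0 e1 e2 e3 : E) (hχ : ‖χ‖ = 1)
    (hU0 : U (emb0 χ) = emb0 e0 + emb1 e1)
    (hU1 : U (emb1 χ) = emb0 e2 + emb1 e3)
    (paa pbb : ℝ)
    (hpaa : paa = (1/4) * ‖e0 + e2 - e1 - e3‖^2)
    (hpbb : pbb = (1/4) * ‖e0 + Complex.I • e1 + Complex.I • e2 - e3‖^2)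
    (hre : ⟪e0, e2⟫.re + ⟪e1, e3⟫.re = 0)
    (him : ⟪e0, e2⟫.im + ⟪e1, e3⟫.im = 0) :
    paa + pbb = 1 - (1/2) * (⟪e0, e1⟫.re + ⟪e0, e1⟫.im + ⟪e2, e3⟫.re + ⟪e2, e3⟫.im)
      - ⟪e0, e3⟫.re := by
  have hn0 : ‖e0‖^2 + ‖e1‖^2 = 1 := by
    have h := congrArg (fun v => ‖v‖^2) hU0
    simp only [LinearIsometryEquiv.norm_map] at h
    rw [emb_norm_sq, emb0_norm, hχ] at h
    simpa using h.symm
  have hn1 : ‖e2‖^2 + ‖e3‖^2 = 1 := by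
    have h := congrArg (fun v => ‖v‖^2) hU1
    simp only [LinearIsometryEquiv.norm_map] at h
    rw [emb_norm_sq, emb1_norm, hχ] at h
    simpa using h.symm
  have hA : ‖e0 + e2 - e1 - e3‖^2 = (⟪e0 + e2 - e1 - e3, e0 + e2 - e1 - e3⟫).re := by
    rw [@InnerProductSpace.norm_sq_eq_re_inner ℂ]; rfl
  have hB : ‖e0 + Complex.I • e1 + Complex.I • e2 - e3‖^2 =
      (⟪e0 + Complex.I • e1 + Complex.I • e2 - e3,
        e0 + Complex.I • e1 + Complex.I • e2 - e3⟫).re := by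
    rw [@InnerProductSpace.norm_sq_eq_re_inner ℂ]; rfl
  have d0 : (⟪e0, e0⟫ : ℂ).re = ‖e0‖^2 := by
    simpa using inner_self_eq_norm_sq (𝕜 := ℂ) e0
  have d1 : (⟪e1, e1⟫ : ℂ).re = ‖e1‖^2 := by
    simpa using inner_self_eq_norm_sq (𝕜 := ℂ) e1
  have d2 : (⟪e2, e2⟫ : ℂ).re = ‖e2‖^2 := by
    simpa using inner_self_eq_norm_sq (𝕜 := ℂ) e2
  have d3 : (⟪e3, e3⟫ : ℂ).re = ‖e3‖^2 := by
    simpa using inner_self_eq_norm_sq (𝕜 := ℂ) e3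
  have sym : ∀ x y : E, (⟪y, x⟫ : ℂ).re = (⟪x, y⟫ : ℂ).re ∧
      (⟪y, x⟫ : ℂ).im = -(⟪x, y⟫ : ℂ).im := by
    intro x y
    exact ⟨(inner_re_symm (𝕜 := ℂ) y x), (inner_im_symm (𝕜 := ℂ) y x)⟩
  obtain ⟨r01, i01⟩ := sym e0 e1
  obtain ⟨r02, i02⟩ := sym e0 e2
  obtain ⟨r03, i03⟩ := sym e0 e3
  obtain ⟨r12, i12⟩ := sym e1 e2
  obtain ⟨r13, i13⟩ := sym e1 e3
  obtain ⟨r23, i23⟩ := sym e2 e3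
  rw [hpaa, hpbb, hA, hB]
  simp only [inner_add_left, inner_add_right, inner_sub_left, inner_sub_right,
    inner_smul_left, inner_smul_right, Complex.add_re, Complex.sub_re,
    Complex.mul_re, Complex.mul_im, Complex.conj_re, Complex.conj_im,
    Complex.I_re, Complex.I_im, Complex.add_im, Complex.sub_im]
  rw [d0, d1, d2, d3] at *
  linarith [hre, him, hn0, hn1, r01, i01, r02, i02, r03, i03, r12, i12, r13, i13, r23, i23]
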